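/- Let (A, 𝔪) be a Buchsbaum local ring of dimension d ≥ 1, let x₁, …, x_d be a system of parameters, let n₁, …, n_d ≥ 1 be integers with n_i ≥ 2 for some i, and set Q = (x₁^{n₁}, …, x_d^{n_d}). Let W = H⁰_𝔪(A) be the 0-th local cohomology (equivalently W = (0) : 𝔪^∞). Then (Q + W) : 𝔪 = Q : 𝔪. -/

import Mathlib

open Ideal IsLocalRing

/-- A sequence `x₁, …, x_s` is a `d`-sequence. -/
def IsDSeq {R : Type*} [CommRing R] {s : ℕ} (x : Fin s → R) : Prop :=
  ∀ i j : Fin s, i ≤ j →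
    (Ideal.span (x '' {k | k < i})).colon (Ideal.span {x i}) =
    (Ideal.span (x '' {k | k < i})).colon (Ideal.span {x i * x j})

/-- A strong `d`-sequence: all power sequences are `d`-sequences. -/
def IsStrongDSeq {R : Type*} [CommRing R] {s : ℕ} (x : Fin s → R) : Prop :=
  ∀ n : Fin s → ℕ, (∀ i, 1 ≤ n i) → IsDSeq (fun i => x i ^ n i)

/-- `x₁, …, x_d` is a system of parameters of the local ring `A`. -/
def IsSOP {A : Type*} [CommRing A] [IsLocalRing A] {d : ℕ} (x : Fin d → A) : Prop :=
  ringKrullDim A = d ∧ (Ideal.span (Set.range x)).radical = maximalIdeal A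

/-- `Q` is a parameter ideal: generated by a system of parameters. -/
def IsParameterIdeal (A : Type*) [CommRing A] [IsLocalRing A] (Q : Ideal A) : Prop :=
  ∃ (d : ℕ) (x : Fin d → A), IsSOP x ∧ Q = Ideal.span (Set.range x)

/-- A Buchsbaum local ring: every system of parameters is a weak `A`-sequence. -/
def IsBuchsbaum (A : Type*) [CommRing A] [IsLocalRing A] : Prop :=
  ∀ (d : ℕ) (x : Fin d → A), IsSOP x →
    ∀ i : Fin d,
      (Ideal.span (x '' {k | k < i})).colon (Ideal.span {x i}) =
      (Ideal.span (x '' {k | k < i})).colon (maximalIdeal A)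

/-- The 0-th local cohomology `H⁰_𝔪(A)`, as the ideal of elements killed by a power of `𝔪`. -/
noncomputable def H0 (A : Type*) [CommRing A] [IsLocalRing A] : Ideal A :=
  ⨆ n : ℕ, (⊥ : Ideal A).colon (((maximalIdeal A) ^ n : Ideal A) : Set A)

/-- The length of a module, as the Krull dimension of its submodule lattice (valued in `ℕ∞`). -/
noncomputable def moduleLength (R M : Type*) [Ring R] [AddCommGroup M] [Module R M] : ℕ∞ :=
  (Order.krullDim (Submodule R M)).unbotD 0

/-- `ℓ_A(I/Q)`: the length of `I/Q`. -/
noncomputable def quotLength {A : Type*} [CommRing A] (Q I : Ideal A) : ℕ∞ :=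
  moduleLength (A ⧸ Q) (I.map (Ideal.Quotient.mk Q))

/-- `r(A)`: the supremum of the indices of reducibility of parameter ideals. -/
noncomputable def typeR (A : Type*) [CommRing A] [IsLocalRing A] : ℕ∞ :=
  ⨆ Q ∈ {Q : Ideal A | IsParameterIdeal A Q}, quotLength Q (Q.colon (maximalIdeal A))

/-- The reduction number `r_Q(I) = min{n ≥ 0 ∣ I^{n+1} = Q Iⁿ}`. -/
noncomputable def reductionNumber {A : Type*} [CommRing A] (Q I : Ideal A) : ℕ :=
  sInf {n : ℕ | I ^ (n + 1) = Q * I ^ n}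

/-- `x` is integral over the ideal `Q`. -/
def IsIntegralOverIdeal {A : Type*} [CommRing A] (Q : Ideal A) (x : A) : Prop :=
  ∃ n : ℕ, 0 < n ∧ ∃ c : ℕ → A, (∀ i ∈ Finset.Icc 1 n, c i ∈ Q ^ i) ∧
    x ^ n + ∑ i ∈ Finset.Icc 1 n, c i * x ^ (n - i) = 0

/-- `A` has Hilbert–Samuel multiplicity `e` (with respect to its maximal ideal). -/
def HasHSMultiplicity (A : Type*) [CommRing A] [IsLocalRing A] (e : ℕ) : Prop :=
  ∃ d : ℕ, ringKrullDim A = d ∧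
    Filter.Tendsto
      (fun n : ℕ =>
        ((d.factorial : ℝ) * ((moduleLength A (A ⧸ (maximalIdeal A) ^ n)).toNat : ℝ)) / (n : ℝ) ^ d)
      Filter.atTop (nhds (e : ℝ))

/-- The local ring `A` has depth `n`. -/
def HasDepth (A : Type*) [CommRing A] [IsLocalRing A] (n : ℕ) : Prop :=
  (∃ rs : List A, rs.length = n ∧ (∀ a ∈ rs, a ∈ maximalIdeal A) ∧
      RingTheory.Sequence.IsRegular A rs) ∧
    ∀ rs : List A, (∀ a ∈ rs, a ∈ maximalIdeal A) → RingTheory.Sequence.IsRegular A rs →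
      rs.length ≤ n

section Aux
variable {A : Type*} [CommRing A] [IsLocalRing A]

lemma aux_mem_colon_singleton {I : Ideal A} {a b : A} :
    a ∈ I.colon (Ideal.span {b}) ↔ a * b ∈ I :=
  Submodule.mem_colon_span_singleton.trans (by rw [smul_eq_mul])

lemma aux_radical_span_pow {d : ℕ} (x : Fin d → A) (m : Fin d → ℕ) (hm : ∀ i, 1 ≤ m i) :
    (Ideal.span (Set.range fun i => x i ^ m i)).radical = (Ideal.span (Set.range x)).radical := by
  apply le_antisymm
  · apply Ideal.radical_mono
    rw [Ideal.span_le]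
    rintro _ ⟨i, rfl⟩
    exact Ideal.pow_mem_of_mem _ (Ideal.subset_span (Set.mem_range_self i)) _ (hm i)
  · have h1 : Ideal.span (Set.range x) ≤ (Ideal.span (Set.range fun i => x i ^ m i)).radical := by
      rw [Ideal.span_le]
      rintro _ ⟨i, rfl⟩
      exact Ideal.mem_radical_iff.mpr ⟨m i, Ideal.subset_span ⟨i, rfl⟩⟩
    calc (Ideal.span (Set.range x)).radical
        ≤ ((Ideal.span (Set.range fun i => x i ^ m i)).radical).radical :=
          Ideal.radical_mono h1
      _ = _ := Ideal.radical_idem _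

lemma aux_isSOP_pow {d : ℕ} {x : Fin d → A} (h : IsSOP x) (m : Fin d → ℕ) (hm : ∀ i, 1 ≤ m i) :
    IsSOP (fun i => x i ^ m i) :=
  ⟨h.1, by rw [aux_radical_span_pow x m hm, h.2]⟩

lemma aux_isSOP_comp {d : ℕ} {x : Fin d → A} (h : IsSOP x) (σ : Equiv.Perm (Fin d)) :
    IsSOP (x ∘ σ) :=
  ⟨h.1, by rw [σ.surjective.range_comp x, h.2]⟩

lemma aux_sop_mem_max {d : ℕ} {x : Fin d → A} (h : IsSOP x) (i : Fin d) :
    x i ∈ maximalIdeal A :=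
  h.2 ▸ Ideal.le_radical (Ideal.subset_span ⟨i, rfl⟩)

/-- Buchsbaum: `(x_i^{n_i} : i ≠ j) : x_j^k = (x_i^{n_i} : i ≠ j) : 𝔪` for any `k ≥ 1`. -/
lemma aux_buchsbaum_colon (hB : IsBuchsbaum A) {d : ℕ} (hd : 1 ≤ d)
    {x : Fin d → A} (hsop : IsSOP x) (n : Fin d → ℕ) (hn1 : ∀ i, 1 ≤ n i)
    (j : Fin d) (k : ℕ) (hk : 1 ≤ k) :
    (Ideal.span ((fun i => x i ^ n i) '' {i | i ≠ j})).colon (Ideal.span {x j ^ k}) =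
    (Ideal.span ((fun i => x i ^ n i) '' {i | i ≠ j})).colon (maximalIdeal A) := by
  set last : Fin d := ⟨d - 1, by omega⟩ with hlastdef
  have hle : ∀ i : Fin d, i ≤ last := by
    intro i
    have := i.isLt
    simp only [Fin.le_def, hlastdef]
    omega
  set m : Fin d → ℕ := fun i => if i = j then k else n i with hm
  have hm1 : ∀ i, 1 ≤ m i := by
    intro i
    by_cases h : i = j <;> simp [hm, h, hk, hn1 i]
  set σ : Equiv.Perm (Fin d) := Equiv.swap j last with hσ
  set z : Fin d → A := (fun i => x i ^ m i) ∘ σ with hz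
  have hzsop : IsSOP z := aux_isSOP_comp (aux_isSOP_pow hsop m hm1) σ
  have key := hB d z hzsop last
  have hset : {i : Fin d | i < last} = {last}ᶜ := by
    ext i
    simp only [Set.mem_setOf_eq, Set.mem_compl_iff, Set.mem_singleton_iff]
    constructor
    · exact fun h => ne_of_lt h
    · exact fun h => lt_of_le_of_ne (hle i) h
  have himg : z '' {i : Fin d | i < last} = (fun i => x i ^ n i) '' {i | i ≠ j} := by
    rw [hset]
    have : z '' {last}ᶜ = (fun i => x i ^ m i) '' (σ '' {last}ᶜ) := by
      rw [hz, Set.image_comp]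
    rw [this, Set.image_compl_eq σ.bijective, Set.image_singleton]
    have hσlast : σ last = j := Equiv.swap_apply_right j last
    rw [hσlast]
    apply Set.image_congr
    intro i hi
    simp only [Set.mem_compl_iff, Set.mem_singleton_iff] at hi
    simp [hm, hi]
  have hzlast : z last = x j ^ k := by
    simp [hz, Function.comp_apply, hσ, Equiv.swap_apply_right, hm]
  rw [himg, hzlast] at key
  exact key

/-- In a Buchsbaum ring, `H⁰_𝔪(A) ⊆ 0 : 𝔪`. -/
lemma aux_H0_le (hB : IsBuchsbaum A) {d : ℕ} (hd : 1 ≤ d) {x : Fin d → A} (hsop : IsSOP x) :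
    H0 A ≤ (⊥ : Ideal A).colon (maximalIdeal A) := by
  apply iSup_le
  intro nn
  rcases Nat.eq_zero_or_pos nn with h0 | h1
  · subst h0
    intro w hw
    have hw0 : w = 0 := by
      have := Submodule.mem_colon.mp hw 1 (by simp)
      simpa using this
    simp [hw0]
  · set i0 : Fin d := ⟨0, hd⟩ with hi0
    set m : Fin d → ℕ := fun i => if i = i0 then nn else 1 with hm
    have hm1 : ∀ i, 1 ≤ m i := by
      intro i
      by_cases h : i = i0 <;> simp [hm, h] <;> omega
    set z : Fin d → A := fun i => x i ^ m i with hz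
    have hzsop : IsSOP z := aux_isSOP_pow hsop m hm1
    have key := hB d z hzsop i0
    have hset : {k : Fin d | k < i0} = ∅ := by
      ext i
      simp [hi0, Fin.lt_def]
    rw [hset, Set.image_empty, Ideal.span_empty] at key
    have hzi0 : z i0 = x i0 ^ nn := by simp [hz, hm]
    rw [hzi0] at key
    intro w hw
    have hx0 : x i0 ^ nn ∈ (maximalIdeal A) ^ nn :=
      Ideal.pow_mem_pow (aux_sop_mem_max hsop i0) nn
    have hw2 : w ∈ (⊥ : Ideal A).colon (Ideal.span {x i0 ^ nn}) :=
      aux_mem_colon_singleton.mpr (by simpa using Submodule.mem_colon.mp hw _ hx0)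
    rw [key] at hw2
    exact hw2

end Aux

theorem stmt8 {A : Type*} [CommRing A] [IsLocalRing A] [IsNoetherianRing A]
    (hB : IsBuchsbaum A) {d : ℕ} (hd : 1 ≤ d) (x : Fin d → A) (hsop : IsSOP x)
    (n : Fin d → ℕ) (hn1 : ∀ i, 1 ≤ n i) (hn2 : ∃ i, 2 ≤ n i)
    (Q : Ideal A) (hQ : Q = Ideal.span (Set.range fun i => x i ^ n i)) :
    (Q + H0 A).colon (maximalIdeal A) = Q.colon (maximalIdeal A) := by
  obtain ⟨j, hj⟩ := hn2
  set 𝔪 := maximalIdeal A with h𝔪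
  set W := H0 A with hW
  -- W is killed by 𝔪
  have hWkill : ∀ w ∈ W, ∀ u ∈ 𝔪, w * u = 0 := by
    intro w hw u hu
    have := Submodule.mem_colon.mp (aux_H0_le hB hd hsop hw) u hu
    simpa using this
  set q : Ideal A := Ideal.span ((fun i => x i ^ n i) '' {i | i ≠ j}) with hq
  set p : ℕ := n j - 1 with hp
  have hp1 : 1 ≤ p := by omega
  have hpn : p + 1 = n j := by omega
  -- Q = q ⊔ (x j ^ n j)
  have hQsplit : Q = q ⊔ Ideal.span {x j ^ n j} := by
    rw [hQ, hq]
    have hrange : (Set.range fun i => x i ^ n i)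
        = ((fun i => x i ^ n i) '' {i | i ≠ j}) ∪ ((fun i => x i ^ n i) '' {j}) := by
      rw [← Set.image_union, ← Set.image_univ]
      congr 1
      ext i
      simp [Classical.em]
    rw [hrange, Ideal.span_union, Set.image_singleton]
  have hcolon : ∀ k : ℕ, 1 ≤ k →
      q.colon (Ideal.span {x j ^ k}) = q.colon 𝔪 :=
    fun k hk => aux_buchsbaum_colon hB hd hsop n hn1 j k hk
  have hqQ : q ≤ Q := hQsplit ▸ le_sup_left
  have hxj : x j ∈ 𝔪 := aux_sop_mem_max hsop j
  have hxjp : x j ^ p ∈ 𝔪 := Ideal.pow_mem_of_mem _ hxj _ hp1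
  -- helper: decompose membership in Q + W
  have hdecomp : ∀ z : A, z ∈ Q + W → ∃ q₁ ∈ q, ∃ c : A, ∃ w ∈ W,
      z = q₁ + c * x j ^ n j + w := by
    intro z hz
    rw [Submodule.add_eq_sup, hQsplit] at hz
    obtain ⟨y, hy, w, hwm, rfl⟩ := Submodule.mem_sup.mp hz
    obtain ⟨q₁, hq₁, t, ht, rfl⟩ := Submodule.mem_sup.mp hy
    obtain ⟨c, rfl⟩ := Ideal.mem_span_singleton'.mp ht
    exact ⟨q₁, hq₁, c, w, hwm, rfl⟩
  apply le_antisymm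
  · -- hard direction
    intro a ha
    -- Step 1: decompose x j * a
    have h1 : a * x j ∈ Q + W := by
      have := Submodule.mem_colon.mp ha (x j) hxj
      simpa using this
    obtain ⟨q₀, hq₀, c, w, hwm, heq⟩ := hdecomp _ h1
    -- multiply by x j ^ p
    have h2 : (a - c * x j ^ p) * x j ^ (n j) ∈ q := by
      have hwp : w * x j ^ p = 0 := hWkill w hwm _ hxjp
      have heq' : a * x j = q₀ + c * x j ^ (p + 1) + w := by rw [hpn]; exact heq
      have : (a - c * x j ^ p) * x j ^ (n j) = q₀ * x j ^ p + w * x j ^ p := by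
        rw [← hpn]
        linear_combination x j ^ p * heq'
      rw [this, hwp, add_zero]
      exact Ideal.mul_mem_right _ _ hq₀
    have h3 : a - c * x j ^ p ∈ q.colon 𝔪 := by
      rw [← hcolon (n j) (hn1 j)]
      exact aux_mem_colon_singleton.mpr h2
    -- Goal: a ∈ Q.colon 𝔪
    rw [Submodule.mem_colon]
    intro u hu
    rw [smul_eq_mul]
    have haum : a * u = (a - c * x j ^ p) * u + c * x j ^ p * u := by ring
    have hfirst : (a - c * x j ^ p) * u ∈ Q := by
      apply hqQ
      have := Submodule.mem_colon.mp h3 u hu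
      simpa using this
    -- Step 2: show z := c * x j ^ p * u ∈ Q
    have hz : c * x j ^ p * u ∈ Q + W := by
      have hau : a * u ∈ Q + W := by
        have := Submodule.mem_colon.mp ha u hu
        simpa using this
      have : c * x j ^ p * u = a * u - (a - c * x j ^ p) * u := by ring
      rw [this]
      have hmem : (a - c * x j ^ p) * u ∈ Q + W := by
        have := (le_sup_left : Q ≤ Q ⊔ W) hfirst
        rwa [← Submodule.add_eq_sup] at this
      exact Submodule.sub_mem _ hau hmem
    obtain ⟨q₁, hq₁, c₁, w₁, hw₁, heq₁⟩ := hdecomp _ hz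
    have h4 : (c * u - c₁ * x j) * x j ^ (n j) ∈ q := by
      have hw₁x : w₁ * x j = 0 := hWkill w₁ hw₁ _ hxj
      have heq₁' : c * x j ^ p * u = q₁ + c₁ * x j ^ (p + 1) + w₁ := by rw [hpn]; exact heq₁
      have : (c * u - c₁ * x j) * x j ^ (n j) = q₁ * x j + w₁ * x j := by
        rw [← hpn]
        linear_combination x j * heq₁'
      rw [this, hw₁x, add_zero]
      exact Ideal.mul_mem_right _ _ hq₁
    have h5 : (c * u - c₁ * x j) * x j ^ p ∈ q := by
      have : c * u - c₁ * x j ∈ q.colon 𝔪 := by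
        rw [← hcolon (n j) (hn1 j)]
        exact aux_mem_colon_singleton.mpr h4
      rw [← hcolon p hp1] at this
      exact aux_mem_colon_singleton.mp this
    have : c * x j ^ p * u = (c * u - c₁ * x j) * x j ^ p + c₁ * x j ^ (n j) := by
      rw [← hpn]; ring
    rw [haum, this]
    refine Submodule.add_mem _ hfirst (Submodule.add_mem _ (hqQ h5) ?_)
    rw [hQsplit]
    exact (le_sup_right : Ideal.span {x j ^ n j} ≤ _) (Ideal.mem_span_singleton'.mpr ⟨c₁, rfl⟩)
  · -- easy direction
    intro a ha
    rw [Submodule.mem_colon] at ha ⊢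
    intro u hu
    have := (le_sup_left : Q ≤ Q ⊔ W) (ha u hu)
    rwa [← Submodule.add_eq_sup] at this
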